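/- Let α be a partial action of a finite group G on a unital ring R (with each domain D_g generated by a central idempotent). If R has right Krull dimension, then the partial skew group ring R*_α G has right Krull dimension and Kdim(R*_α G) ≤ Kdim(R). -/

import Mathlib

/-- A unital (untwisted) partial action of a group `G` on a unital ring `R`:
the domain `D g` is the ideal generated by the central idempotent `e g`
(`D g = {x | e g * x = x}`), and `act g` is the ring isomorphism
`α_g : D g⁻¹ → D g` (values outside `D g⁻¹` are irrelevant). -/
structure PartialAction (G : Type) [Group G] (R : Type) [Ring R] where
  e : G → R
  idem : ∀ g, e g * e g = e g
  central : ∀ g r, e g * r = r * e g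
  e_one : e 1 = 1
  act : G → R → R
  act_mem : ∀ g x, e g⁻¹ * x = x → e g * act g x = act g x
  act_add : ∀ g x y, e g⁻¹ * x = x → e g⁻¹ * y = y →
    act g (x + y) = act g x + act g y
  act_mul : ∀ g x y, e g⁻¹ * x = x → e g⁻¹ * y = y →
    act g (x * y) = act g x * act g y
  act_one : ∀ x, act 1 x = x
  inv_act : ∀ g x, e g⁻¹ * x = x → act g⁻¹ (act g x) = x
  -- α_g(D_{g⁻¹} ∩ D_h) = D_g ∩ D_{gh}
  act_range : ∀ g h x, e g⁻¹ * x = x → e h * x = x → e (g * h) * act g x = act g x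
  act_range' : ∀ g h y, e g * y = y → e (g * h) * y = y →
    ∃ x, e g⁻¹ * x = x ∧ e h * x = x ∧ act g x = y
  -- α_g ∘ α_h = α_{gh} on α_{h⁻¹}(D_h ∩ D_{g⁻¹})
  comp : ∀ g h a, e h⁻¹ * a = a → e (h⁻¹ * g⁻¹) * a = a →
    act g (act h a) = act (g * h) a

/-- A realization of the partial skew group ring `R *_α G`:  a ring `A` with
maps `δ g : D g → A` such that `A = ⊕_{g ∈ G} D g δ_g` with multiplication
`(a δ_g)(b δ_h) = α_g(α_{g⁻¹}(a) b) δ_{gh}`. -/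
structure IsPartialSkewGroupRing {G R : Type} [Group G] [Ring R]
    (pa : PartialAction G R) (A : Type) [Ring A] (δ : G → R → A) : Prop where
  proj : ∀ g a, δ g a = δ g (pa.e g * a)
  add : ∀ g a b, δ g (a + b) = δ g a + δ g b
  mul : ∀ g h a b, pa.e g * a = a → pa.e h * b = b →
    δ g a * δ h b = δ (g * h) (pa.act g (pa.act g⁻¹ a * b))
  one : δ 1 1 = 1
  indep : ∀ (s : Finset G) (a : G → R), (∀ g, pa.e g * a g = a g) →
    (∑ g ∈ s, δ g (a g)) = 0 → ∀ g ∈ s, a g = 0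
  span : ∀ x : A, ∃ (s : Finset G) (a : G → R),
    (∀ g, pa.e g * a g = a g) ∧ x = ∑ g ∈ s, δ g (a g)
/-- `DeviationLE o α` says that the deviation of the poset `α` (in the sense of
Gabriel–Rentschler) is at most the ordinal `o`:  in every descending chain
`f 0 ≥ f 1 ≥ …`, for all but finitely many `n` the factor interval
`[f (n+1), f n]` is either trivial or has deviation `≤ o'` for some `o' < o`. -/
def DeviationLE (o : Ordinal.{0}) (α : Type) [Preorder α] : Prop :=
  ∀ f : ℕ → α, (∀ n, f (n + 1) ≤ f n) →
    ∃ N : ℕ, ∀ n ≥ N, f n ≤ f (n + 1) ∨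
      ∃ (o' : Ordinal.{0}) (_ : o' < o),
        DeviationLE o' (Set.Icc (f (n + 1)) (f n))
termination_by o

/-- A module `M` has Krull dimension when the lattice of its submodules has
(ordinal-valued) deviation. -/
def HasKrullDimModule (R M : Type) [Ring R] [AddCommGroup M] [Module R M] : Prop :=
  ∃ o : Ordinal.{0}, DeviationLE o (Submodule R M)

/-- A ring has right Krull dimension when the lattice of its right ideals,
i.e. of left ideals of the opposite ring, has deviation. -/
def HasRightKrullDim (A : Type) [Ring A] : Prop :=
  ∃ o : Ordinal.{0}, DeviationLE o (Submodule Aᵐᵒᵖ Aᵐᵒᵖ)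

/-- `Kdim A ≤ Kdim B` (for the right Krull dimensions):  every ordinal bounding
the deviation of the right ideal lattice of `B` also bounds that of `A`. -/
def RightKrullDimLE (A B : Type) [Ring A] [Ring B] : Prop :=
  ∀ o : Ordinal.{0}, DeviationLE o (Submodule Bᵐᵒᵖ Bᵐᵒᵖ) →
    DeviationLE o (Submodule Aᵐᵒᵖ Aᵐᵒᵖ)



theorem devTransfer (o : Ordinal.{0}) : ∀ {α β : Type} [Preorder α] [Preorder β]
    (g : α → β), Monotone g → (∀ a b : α, a < b → g a < g b) →
    DeviationLE o β → DeviationLE o α := by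
  induction o using Ordinal.induction with
  | h o IH =>
    intro α β _ _ g hm hs h
    rw [DeviationLE] at h ⊢
    intro f hf
    obtain ⟨N, hN⟩ := h (g ∘ f) (fun n => hm (hf n))
    refine ⟨N, fun n hn => ?_⟩
    rcases hN n hn with h1 | ⟨o', ho', hdev⟩
    · left
      by_contra hc
      have hlt : f (n+1) < f n := lt_of_le_not_ge (hf n) hc
      exact (lt_of_le_not_ge (hf n) hc |> hs _ _).not_ge h1
    · right
      refine ⟨o', ho', ?_⟩
      refine IH o' ho' (fun x : Set.Icc (f (n+1)) (f n) =>
        (⟨g x.1, hm x.2.1, hm x.2.2⟩ : Set.Icc (g (f (n+1))) (g (f n)))) ?_ ?_ hdev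
      · intro x y hxy; exact hm hxy
      · intro x y hxy
        exact Subtype.mk_lt_mk.mpr (hs _ _ (Subtype.mk_lt_mk.mp (by exact hxy)))

theorem devMono {α : Type} [Preorder α] {o o' : Ordinal.{0}} (h : o ≤ o')
    (hd : DeviationLE o α) : DeviationLE o' α := by
  rw [DeviationLE] at hd ⊢
  intro f hf
  obtain ⟨N, hN⟩ := hd f hf
  refine ⟨N, fun n hn => ?_⟩
  rcases hN n hn with h1 | ⟨o'', ho'', hdev⟩
  · exact Or.inl h1
  · exact Or.inr ⟨o'', lt_of_lt_of_le ho'' h, hdev⟩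

theorem devProd (o : Ordinal.{0}) : ∀ {α β : Type} [Preorder α] [Preorder β],
    DeviationLE o α → DeviationLE o β → DeviationLE o (α × β) := by
  induction o using Ordinal.induction with
  | h o IH =>
    intro α β _ _ ha hb
    rw [DeviationLE] at ha hb ⊢
    intro f hf
    obtain ⟨N₁, hN₁⟩ := ha (fun n => (f n).1) (fun n => (hf n).1)
    obtain ⟨N₂, hN₂⟩ := hb (fun n => (f n).2) (fun n => (hf n).2)
    refine ⟨max N₁ N₂, fun n hn => ?_⟩
    rcases hN₁ n (le_trans (le_max_left _ _) hn) with h1 | ⟨o₁, ho₁, hd₁⟩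
    · rcases hN₂ n (le_trans (le_max_right _ _) hn) with h2 | ⟨o₂, ho₂, hd₂⟩
      · exact Or.inl ⟨h1, h2⟩
      · -- first coordinate trivial; project to second
        refine Or.inr ⟨o₂, ho₂, ?_⟩
        refine devTransfer o₂ (fun x : Set.Icc (f (n+1)) (f n) =>
          (⟨x.1.2, x.2.1.2, x.2.2.2⟩ : Set.Icc (f (n+1)).2 (f n).2)) ?_ ?_ hd₂
        · intro x y hxy; exact hxy.2
        · intro x y hxy
          change (x.1).2 < (y.1).2
          have hle : x.1 ≤ y.1 := hxy.le
          refine lt_of_le_not_ge hle.2 (fun hc => hxy.not_ge ?_)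
          exact ⟨le_trans y.2.2.1 (le_trans h1 x.2.1.1), hc⟩
    · rcases hN₂ n (le_trans (le_max_right _ _) hn) with h2 | ⟨o₂, ho₂, hd₂⟩
      · refine Or.inr ⟨o₁, ho₁, ?_⟩
        refine devTransfer o₁ (fun x : Set.Icc (f (n+1)) (f n) =>
          (⟨x.1.1, x.2.1.1, x.2.2.1⟩ : Set.Icc (f (n+1)).1 (f n).1)) ?_ ?_ hd₁
        · intro x y hxy; exact hxy.1
        · intro x y hxy
          change (x.1).1 < (y.1).1
          have hle : x.1 ≤ y.1 := hxy.le
          refine lt_of_le_not_ge hle.1 (fun hc => hxy.not_ge ?_)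
          exact ⟨hc, le_trans y.2.2.2 (le_trans h2 x.2.1.2)⟩
      · refine Or.inr ⟨max o₁ o₂, max_lt ho₁ ho₂, ?_⟩
        have hd₁' := devMono (le_max_left o₁ o₂) hd₁
        have hd₂' := devMono (le_max_right o₁ o₂) hd₂
        have hp := IH (max o₁ o₂) (max_lt ho₁ ho₂) hd₁' hd₂'
        refine devTransfer _ (fun x : Set.Icc (f (n+1)) (f n) =>
          ((⟨x.1.1, x.2.1.1, x.2.2.1⟩, ⟨x.1.2, x.2.1.2, x.2.2.2⟩) :
            Set.Icc (f (n+1)).1 (f n).1 × Set.Icc (f (n+1)).2 (f n).2)) ?_ ?_ hp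
        · intro x y hxy; exact ⟨hxy.1, hxy.2⟩
        · intro x y hxy
          have hle : x.1 ≤ y.1 := hxy.le
          refine lt_of_le_not_ge ⟨hle.1, hle.2⟩ (fun hc => hxy.not_ge ?_)
          exact ⟨hc.1, hc.2⟩

/-- Krull dimension transfers along a surjective linear map (to the target). -/
theorem devSurj {S M M' : Type} [Ring S] [AddCommGroup M] [Module S M]
    [AddCommGroup M'] [Module S M'] (f : M →ₗ[S] M') (hf : Function.Surjective f)
    (o : Ordinal.{0}) (h : DeviationLE o (Submodule S M)) :
    DeviationLE o (Submodule S M') := by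
  refine devTransfer o (fun P => P.comap f) (fun P Q h => Submodule.comap_mono h) ?_ h
  intro P Q hPQ
  refine lt_of_le_not_ge (Submodule.comap_mono hPQ.le) (fun hc => hPQ.not_ge ?_)
  intro x hx
  obtain ⟨y, rfl⟩ := hf x
  exact hc hx

/-- Transfer along a submodule/quotient pair. -/
theorem devExt {S M : Type} [Ring S] [AddCommGroup M] [Module S M]
    (N : Submodule S M) (o : Ordinal.{0})
    (h1 : DeviationLE o (Submodule S N)) (h2 : DeviationLE o (Submodule S (M ⧸ N))) :
    DeviationLE o (Submodule S M) := by
  have hp := devProd o h1 h2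
  refine devTransfer o
    (fun P => ((P.comap N.subtype, P.map N.mkQ) : Submodule S N × Submodule S (M ⧸ N)))
    ?_ ?_ hp
  · intro P Q h; exact ⟨Submodule.comap_mono h, Submodule.map_mono h⟩
  · intro P Q hPQ
    refine lt_of_le_not_ge ⟨Submodule.comap_mono hPQ.le, Submodule.map_mono hPQ.le⟩
      (fun hc => hPQ.not_ge ?_)
    intro x hxQ
    have : N.mkQ x ∈ Q.map N.mkQ := ⟨x, hxQ, rfl⟩
    obtain ⟨p, hpP, hpx⟩ := hc.2 this
    have hxp : x - p ∈ N := by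
      have : N.mkQ (x - p) = 0 := by
        rw [map_sub]
        simp only [Submodule.mkQ_apply] at hpx ⊢
        rw [hpx, sub_self]
      rwa [← Submodule.Quotient.mk_eq_zero, ← Submodule.mkQ_apply]
    have hxpQ : x - p ∈ Q := Q.sub_mem hxQ (hPQ.le hpP)
    have : (⟨x - p, hxp⟩ : N) ∈ Q.comap N.subtype := hxpQ
    have hxpP : x - p ∈ P := hc.1 this
    simpa using P.add_mem hxpP hpP

theorem devFG {S : Type} [Ring S] (o : Ordinal.{0})
    (hS : DeviationLE o (Submodule S S)) :
    ∀ (n : ℕ) (M : Type) [AddCommGroup M] [Module S M] (v : Fin n → M),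
      Submodule.span S (Set.range v) = ⊤ → DeviationLE o (Submodule S M) := by
  intro n
  induction n with
  | zero =>
    intro M _ _ v hv
    have hbot : (⊤ : Submodule S M) = ⊥ := by
      rw [← hv]
      have : Set.range v = ∅ := Set.range_eq_empty v
      rw [this, Submodule.span_empty]
    rw [DeviationLE]
    intro f hf
    refine ⟨0, fun n _ => Or.inl ?_⟩
    exact le_trans (le_trans le_top hbot.le) bot_le
  | succ n IH =>
    intro M _ _ v hv
    set N : Submodule S M := LinearMap.range (LinearMap.toSpanSingleton S M (v 0)) with hN
    have h1 : DeviationLE o (Submodule S N) :=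
      devSurj (LinearMap.toSpanSingleton S M (v 0)).rangeRestrict
        (LinearMap.surjective_rangeRestrict _) o hS
    have h2 : DeviationLE o (Submodule S (M ⧸ N)) := by
      refine IH (M ⧸ N) (fun i => N.mkQ (v i.succ)) ?_
      have hv0 : v 0 ∈ N := ⟨1, one_smul _ _⟩
      have hmk : Set.range (N.mkQ ∘ v) ⊆ insert 0 (Set.range fun i : Fin n => N.mkQ (v i.succ)) := by
        rintro _ ⟨i, rfl⟩
        induction i using Fin.cases with
        | zero =>
          left
          simpa [Submodule.mkQ_apply, Submodule.Quotient.mk_eq_zero] using hv0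
        | succ j => exact Or.inr ⟨j, rfl⟩
      have htop : Submodule.span S (Set.range (N.mkQ ∘ v)) = ⊤ := by
        rw [Set.range_comp, ← Submodule.map_span, hv, Submodule.map_top, Submodule.range_mkQ]
      refine top_le_iff.mp ?_
      rw [← htop]
      refine Submodule.span_le.mpr (fun x hx => ?_)
      have := hmk hx
      rcases this with h | h
      · simp [h]
      · exact Submodule.subset_span h
    exact devExt N o h1 h2

/-- Let `α` be a partial action of a finite group `G` on a
unital ring `R` (each domain generated by a central idempotent).  If `R` has
right Krull dimension, then the partial skew group ring `R*_α G` has right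
Krull dimension and `Kdim(R*_α G) ≤ Kdim(R)`. -/
theorem partialSkewGroupRing_krullDim_le
    {G R : Type} [Group G] [Finite G] [Ring R]
    (pa : PartialAction G R)
    (A : Type) [Ring A] (δ : G → R → A)
    (hcp : IsPartialSkewGroupRing pa A δ)
    (hR : HasRightKrullDim R) :
    HasRightKrullDim A ∧ RightKrullDimLE A R := by
    classical
  -- `δ 1 : R → A` is a ring homomorphism
  have hδ1zero : δ 1 (0 : R) = 0 := by
    have h := hcp.add 1 0 0
    rw [add_zero] at h
    exact (left_eq_add.mp h)
  have hδ1mul : ∀ a b : R, δ 1 (a * b) = δ 1 a * δ 1 b := by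
    intro a b
    have h := hcp.mul 1 1 a b (by rw [pa.e_one, one_mul]) (by rw [pa.e_one, one_mul])
    rw [h, one_mul, inv_one, pa.act_one, pa.act_one]
  let f1 : R →+* A :=
    { toFun := δ 1
      map_one' := hcp.one
      map_mul' := hδ1mul
      map_zero' := hδ1zero
      map_add' := hcp.add 1 }
  let φ : Rᵐᵒᵖ →+* Aᵐᵒᵖ := RingHom.op f1
  -- key decomposition of generators
  have hkey : ∀ (g : G) (a : R), pa.e g * a = a →
      δ g (pa.e g) * δ 1 (pa.act g⁻¹ a) = δ g a := by
    intro g a ha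
    have h := hcp.mul g 1 (pa.e g) (pa.act g⁻¹ a) (pa.idem g)
      (by rw [pa.e_one, one_mul])
    rw [h, mul_one]
    congr 1
    have he : pa.e g⁻¹⁻¹ * pa.e g = pa.e g := by rw [inv_inv]; exact pa.idem g
    have ha' : pa.e g⁻¹⁻¹ * a = a := by rw [inv_inv]; exact ha
    have hmul := pa.act_mul g⁻¹ (pa.e g) a he ha'
    rw [ha] at hmul
    rw [← hmul]
    have := pa.inv_act g⁻¹ a ha'
    rw [inv_inv] at this
    rw [this]
  obtain ⟨o₀, ho₀⟩ := hR
  suffices key : RightKrullDimLE A R by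
    exact ⟨⟨o₀, key o₀ ho₀⟩, key⟩
  intro o ho
  -- `Aᵐᵒᵖ` as a module over `Rᵐᵒᵖ` via `φ`
  letI : Module Rᵐᵒᵖ Aᵐᵒᵖ := Module.compHom Aᵐᵒᵖ φ
  have hsmul : ∀ (r : R) (x : A),
      (MulOpposite.op r) • (MulOpposite.op x) = MulOpposite.op (x * δ 1 r) := by
    intro r x; rfl
  -- generators
  let v : G → Aᵐᵒᵖ := fun g => MulOpposite.op (δ g (pa.e g))
  have hspan : Submodule.span Rᵐᵒᵖ (Set.range v) = ⊤ := by
    rw [eq_top_iff]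
    rintro m -
    obtain ⟨s, a, ha, hx⟩ := hcp.span m.unop
    have hm : m = ∑ g ∈ s, MulOpposite.op (δ g (a g)) := by
      rw [← MulOpposite.op_unop m, hx]
      exact map_sum (MulOpposite.opAddEquiv (α := A)) _ s
    rw [hm]
    refine Submodule.sum_mem _ (fun g _ => ?_)
    have : MulOpposite.op (δ g (a g)) =
        (MulOpposite.op (pa.act g⁻¹ (a g))) • v g := by
      rw [hsmul, hkey g (a g) (ha g)]
    rw [this]
    exact Submodule.smul_mem _ _ (Submodule.subset_span ⟨g, rfl⟩)
  -- Krull dimension of `Aᵐᵒᵖ` as `Rᵐᵒᵖ`-module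
  have hAR : DeviationLE o (Submodule Rᵐᵒᵖ Aᵐᵒᵖ) := by
    have : Nonempty (Fintype G) := ⟨Fintype.ofFinite G⟩
    obtain ⟨inst⟩ := this
    let eq := @Fintype.equivFin G inst
    refine devFG o ho (@Fintype.card G inst) Aᵐᵒᵖ (v ∘ eq.symm) ?_
    rw [Set.range_comp, Equiv.range_eq_univ, Set.image_univ, hspan]
  -- restriction of scalars: strict monotone map into the `Rᵐᵒᵖ`-lattice
  let Ψ : Submodule Aᵐᵒᵖ Aᵐᵒᵖ → Submodule Rᵐᵒᵖ Aᵐᵒᵖ := fun P =>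
    { carrier := P
      add_mem' := fun hx hy => P.add_mem hx hy
      zero_mem' := P.zero_mem
      smul_mem' := fun r x hx => P.smul_mem (φ r) hx }
  have hΨle : ∀ P Q, P ≤ Q ↔ Ψ P ≤ Ψ Q := by
    intro P Q
    constructor
    · intro h x hx; exact h hx
    · intro h x hx; exact h hx
  refine devTransfer o Ψ (fun P Q h => (hΨle P Q).mp h) ?_ hAR
  intro P Q hPQ
  exact lt_of_le_not_ge ((hΨle P Q).mp hPQ.le)
    (fun hc => hPQ.not_ge ((hΨle Q P).mpr hc))
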